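/- arXiv:1803.06847 — 3 statements merged into one kernel-verified Lean document; each statement's English description precedes it below -/
import Mathlib

section
/- For every p ≥ 1 and every n ≥ 2, a random vector X uniformly distributed on the ℓ_p unit ball B_p^n satisfies E[X_1² X_2²] − E[X_1²]·E[X_2²] < 0, where X_1, X_2 are the first two coordinates of X. Equivalently, setting f(η1,η2) = E[⟨X,η1⟩²⟨X,η2⟩²] − E[⟨X,η1⟩²]·E[⟨X,η2⟩²], one has f(e1,e2) < 0. -/
open MeasureTheory Real
open scoped RealInnerProductSpace ENNReal

noncomputable section

/-- `ℝⁿ` with the Euclidean structure. -/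
abbrev E (n : ℕ) := EuclideanSpace ℝ (Fin n)

/-- The unit ball of the `ℓ_p` norm on `ℝⁿ`. -/
def lpBall (n : ℕ) (p : ℝ) : Set (E n) := {x | ∑ i, |x i| ^ p ≤ 1}

/-- The uniform probability measure (normalized Lebesgue measure) on a set `K ⊆ ℝⁿ`. -/
def unif {n : ℕ} (K : Set (E n)) : Measure (E n) := (volume K)⁻¹ • volume.restrict K

/-- `f(η₁,η₂) = E⟨X,η₁⟩²⟨X,η₂⟩² - E⟨X,η₁⟩² E⟨X,η₂⟩²` for `X` distributed according to `μ`. -/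
def covf {n : ℕ} (μ : Measure (E n)) (a b : E n) : ℝ :=
  (∫ x, ⟪x, a⟫ ^ 2 * ⟪x, b⟫ ^ 2 ∂μ) - (∫ x, ⟪x, a⟫ ^ 2 ∂μ) * (∫ x, ⟪x, b⟫ ^ 2 ∂μ)

/-- The canonical basis vectors of `ℝⁿ`. -/
def stdb {n : ℕ} (i : Fin n) : E n := EuclideanSpace.single i 1

open Set Module

lemma two_k_pos (k : ℕ) : (-1:ℝ) < 2*k := by
  have h : (0:ℝ) ≤ 2*k := by positivity
  linarith

lemma aux1D_on (p : ℝ) (hp : 1 ≤ p) (k : ℕ) :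
    IntegrableOn (fun t : ℝ => t ^ (2*k) * Real.exp (-|t| ^ p)) (Ioi 0) := by
  have h := integrableOn_rpow_mul_exp_neg_rpow (p := p) (s := (2*k : ℝ)) (two_k_pos k) (by linarith)
  refine h.congr_fun (fun x hx => ?_) measurableSet_Ioi
  rw [abs_of_pos hx]
  norm_cast

lemma aux1D_int (p : ℝ) (hp : 1 ≤ p) (k : ℕ) :
    Integrable (fun t : ℝ => t ^ (2*k) * Real.exp (-|t| ^ p)) := by
  rw [← integrableOn_univ, ← @Iio_union_Ici _ _ (0 : ℝ), integrableOn_union,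
    integrableOn_Ici_iff_integrableOn_Ioi]
  refine ⟨?_, aux1D_on p hp k⟩
  rw [← (Measure.measurePreserving_neg (volume : Measure ℝ)).integrableOn_comp_preimage
      (Homeomorph.neg ℝ).measurableEmbedding]
  have : ((fun t : ℝ => t ^ (2*k) * Real.exp (-|t| ^ p)) ∘ (Neg.neg))
      = fun t : ℝ => t ^ (2*k) * Real.exp (-|t| ^ p) := by
    funext t
    simp [Function.comp, abs_neg, pow_mul, neg_pow]
  rw [this]
  simpa using aux1D_on p hp k

lemma aux1D_eval (p : ℝ) (hp : 1 ≤ p) (k : ℕ) :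
    ∫ t : ℝ, t ^ (2*k) * Real.exp (-|t| ^ p) = 2/p * Real.Gamma ((2*k+1)/p) := by
  have h0 : (fun t : ℝ => t ^ (2*k) * Real.exp (-|t| ^ p))
      = fun t : ℝ => (fun s : ℝ => s ^ (2*k) * Real.exp (-s ^ p)) |t| := by
    funext t
    simp only
    rw [pow_abs, abs_of_nonneg (by rw [pow_mul]; positivity : (0:ℝ) ≤ t ^ (2*k))]
  rw [h0, integral_comp_abs (f := fun s : ℝ => s ^ (2*k) * Real.exp (-s ^ p))]
  have h1 : ∫ x in Ioi (0:ℝ), x ^ (2*k) * Real.exp (-x ^ p)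
      = ∫ x in Ioi (0:ℝ), x ^ ((2*k : ℕ) : ℝ) * Real.exp (-x ^ p) := by
    refine setIntegral_congr_fun measurableSet_Ioi (fun x hx => ?_)
    rw [rpow_natCast]
  rw [h1, integral_rpow_mul_exp_neg_rpow (by linarith) (by push_cast; exact two_k_pos k)]
  push_cast
  ring

lemma gamma_sq_lt {A t : ℝ} (hA : 0 < A) (ht : 0 < t) :
    Real.Gamma (A + t) ^ 2 < Real.Gamma A * Real.Gamma (A + 2*t) := by
  have hGA : 0 < Real.Gamma A := Real.Gamma_pos_of_pos hA
  have hGAt : 0 < Real.Gamma (A + t) := Real.Gamma_pos_of_pos (by linarith)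
  set m : ℝ := Real.Gamma (A + t) / Real.Gamma A with hm
  have hmpos : 0 < m := div_pos hGAt hGA
  have I1 : IntegrableOn (fun x : ℝ => Real.exp (-x) * x ^ (A - 1)) (Ioi 0) :=
    Real.GammaIntegral_convergent hA
  have I2 : IntegrableOn (fun x : ℝ => Real.exp (-x) * x ^ (A + t - 1)) (Ioi 0) :=
    Real.GammaIntegral_convergent (by linarith)
  have I3 : IntegrableOn (fun x : ℝ => Real.exp (-x) * x ^ (A + 2*t - 1)) (Ioi 0) :=
    Real.GammaIntegral_convergent (by linarith)
  have I2' : Integrable (fun x : ℝ => (2*m) * (Real.exp (-x) * x ^ (A + t - 1)))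
      (volume.restrict (Ioi 0)) := I2.const_mul _
  have I1' : Integrable (fun x : ℝ => m^2 * (Real.exp (-x) * x ^ (A - 1)))
      (volume.restrict (Ioi 0)) := I1.const_mul _
  have e1 : Integrable (fun x : ℝ => Real.exp (-x) * x ^ (A + 2*t - 1)
      - (2*m) * (Real.exp (-x) * x ^ (A + t - 1))) (volume.restrict (Ioi 0)) := I3.sub I2'
  have hfun : ∀ x ∈ Ioi (0:ℝ), (x ^ t - m) ^ 2 * (Real.exp (-x) * x ^ (A - 1))
      = Real.exp (-x) * x ^ (A + 2*t - 1) - (2*m) * (Real.exp (-x) * x ^ (A + t - 1))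
        + m^2 * (Real.exp (-x) * x ^ (A - 1)) := by
    intro x hx
    have hx' : (0:ℝ) < x := hx
    rw [show A + 2*t - 1 = 2*t + (A - 1) by ring, rpow_add hx',
      show A + t - 1 = t + (A - 1) by ring, rpow_add hx',
      show (2*t : ℝ) = t * 2 by ring, rpow_mul hx'.le, rpow_two]
    ring
  have Isum : IntegrableOn (fun x : ℝ => Real.exp (-x) * x ^ (A + 2*t - 1)
      - (2*m) * (Real.exp (-x) * x ^ (A + t - 1))
      + m^2 * (Real.exp (-x) * x ^ (A - 1))) (Ioi 0) := e1.add I1'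
  have Ifull : IntegrableOn
      (fun x : ℝ => (x ^ t - m) ^ 2 * (Real.exp (-x) * x ^ (A - 1))) (Ioi 0) :=
    Isum.congr_fun (fun x hx => (hfun x hx).symm) measurableSet_Ioi
  have key : ∫ x in Ioi (0:ℝ), (x ^ t - m) ^ 2 * (Real.exp (-x) * x ^ (A - 1))
      = Real.Gamma (A + 2*t) - 2*m*Real.Gamma (A + t) + m^2 * Real.Gamma A := by
    rw [setIntegral_congr_fun measurableSet_Ioi hfun]
    rw [integral_add e1 I1', integral_sub I3 I2', integral_const_mul, integral_const_mul,
      Real.Gamma_eq_integral hA, Real.Gamma_eq_integral (by linarith : (0:ℝ) < A + t),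
      Real.Gamma_eq_integral (by linarith : (0:ℝ) < A + 2*t)]
  have hpos : 0 < ∫ x in Ioi (0:ℝ), (x ^ t - m) ^ 2 * (Real.exp (-x) * x ^ (A - 1)) := by
    rw [integral_pos_iff_support_of_nonneg_ae]
    · set f : ℝ → ℝ := fun x => (x ^ t - m) ^ 2 * (Real.exp (-x) * x ^ (A - 1)) with hf
      have hsub : Ioi 0 \ {m ^ (1/t)} ⊆ Function.support f := by
        intro x hx
        obtain ⟨hx1, hx2⟩ := hx
        have hx' : (0:ℝ) < x := hx1
        have h1 : x ^ t ≠ m := by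
          intro h
          apply hx2
          have h2 : (x ^ t) ^ (1/t) = x := by
            rw [← rpow_mul hx'.le, mul_one_div_cancel ht.ne', rpow_one]
          rw [← h2, h]
          rfl
        exact mul_ne_zero (pow_ne_zero _ (sub_ne_zero.2 h1))
          (mul_ne_zero (Real.exp_ne_zero _) (rpow_pos_of_pos hx' _).ne')
      calc (0:ℝ≥0∞) < volume (Ioi (0:ℝ) \ {m ^ (1/t)}) := by
            rw [measure_diff_null (measure_singleton _), Real.volume_Ioi]
            exact ENNReal.zero_lt_top
        _ ≤ (volume.restrict (Ioi 0)) (Function.support f) := by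
            rw [Measure.restrict_apply' measurableSet_Ioi]
            exact measure_mono (fun x hx => ⟨hsub hx, hx.1⟩)
    · filter_upwards [ae_restrict_mem measurableSet_Ioi] with x hx
      have hx' : (0:ℝ) < x := hx
      exact mul_nonneg (sq_nonneg _)
        (mul_nonneg (Real.exp_pos _).le (Real.rpow_nonneg hx'.le _))
    · exact Ifull
  rw [key] at hpos
  have hmA : m * Real.Gamma A = Real.Gamma (A + t) := div_mul_cancel₀ _ hGA.ne'
  have h3 := mul_pos hpos hGA
  have hexp : (Real.Gamma (A + 2*t) - 2*m*Real.Gamma (A + t) + m^2 * Real.Gamma A)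
        * Real.Gamma A
      = Real.Gamma A * Real.Gamma (A + 2*t) - Real.Gamma (A+t)^2
        + (m*Real.Gamma A - Real.Gamma (A+t))^2 := by ring
  rw [hexp, hmA, sub_self] at h3
  simpa using h3

def BB (p : ℝ) (n : ℕ) (s : ℝ) : Set (Fin n → ℝ) := {y | ∑ i, |y i| ^ p ≤ s}

def FF {n : ℕ} (S : Finset (Fin n)) : (Fin n → ℝ) → ℝ := fun x => ∏ i ∈ S, (x i)^2

lemma hNm (p : ℝ) (hp : 1 ≤ p) (n : ℕ) : Measurable fun y : Fin n → ℝ => ∑ i, |y i| ^ p := by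
  have : Continuous fun y : Fin n → ℝ => ∑ i, |y i| ^ p := by
    apply continuous_finset_sum
    intro i _
    exact ((continuous_abs.comp (continuous_apply i)).rpow_const
      (fun x => Or.inr (by linarith : (0:ℝ) ≤ p)))
  exact this.measurable

lemma hBBm (p : ℝ) (hp : 1 ≤ p) (n : ℕ) (s : ℝ) : MeasurableSet (BB p n s) :=
  measurableSet_le (hNm p hp n) measurable_const

lemma hFFm {n : ℕ} (S : Finset (Fin n)) : Measurable (FF S) :=
  Finset.measurable_prod _ (fun i _ => (measurable_pi_apply i).pow_const 2)

lemma hFFnn {n : ℕ} (S : Finset (Fin n)) (x : Fin n → ℝ) : 0 ≤ FF S x :=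
  Finset.prod_nonneg (fun i _ => sq_nonneg _)

lemma ballScaling (p : ℝ) (hp : 1 ≤ p) (n : ℕ) (S : Finset (Fin n)) {s : ℝ} (hs : 0 < s) :
    ∫ x in BB p n s, FF S x
      = s ^ (((n:ℝ) + 2*S.card)/p) * ∫ x in BB p n 1, FF S x := by
  have hp0 : 0 < p := lt_of_lt_of_le one_pos hp
  set c : ℝ := s ^ (1/p) with hc
  have hcpos : 0 < c := rpow_pos_of_pos hs _
  have hcp : c ^ p = s := by
    rw [hc, ← rpow_mul hs.le, one_div_mul_cancel hp0.ne', rpow_one]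
  have hmem : ∀ x : Fin n → ℝ, (c • x ∈ BB p n s ↔ x ∈ BB p n 1) := by
    intro x
    simp only [BB, Set.mem_setOf_eq, Pi.smul_apply, smul_eq_mul]
    have habs : ∀ i : Fin n, |c * x i| ^ p = s * |x i| ^ p := by
      intro i
      rw [abs_mul, abs_of_pos hcpos, mul_rpow hcpos.le (abs_nonneg _), hcp]
    rw [Finset.sum_congr rfl (fun i _ => habs i), ← Finset.mul_sum]
    exact mul_le_iff_le_one_right hs
  have hFs : ∀ x : Fin n → ℝ, FF S (c • x) = c ^ (2*S.card) * FF S x := by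
    intro x
    simp only [FF, Pi.smul_apply, smul_eq_mul, mul_pow]
    rw [Finset.prod_mul_distrib, Finset.prod_const, ← pow_mul]
  have key := MeasureTheory.Measure.integral_comp_smul (volume : Measure (Fin n → ℝ))
    ((BB p n s).indicator (FF S)) c
  have hind : ∀ x : Fin n → ℝ, (BB p n s).indicator (FF S) (c • x)
      = c ^ (2*S.card) * (BB p n 1).indicator (FF S) x := by
    intro x
    by_cases h : x ∈ BB p n 1
    · rw [Set.indicator_of_mem ((hmem x).2 h), Set.indicator_of_mem h, hFs]
    · rw [Set.indicator_of_notMem (fun hc' => h ((hmem x).1 hc')),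
        Set.indicator_of_notMem h, mul_zero]
  simp_rw [hind] at key
  rw [integral_const_mul, Module.finrank_fin_fun,
    abs_of_pos (by positivity : (0:ℝ) < ((c ^ n)⁻¹ : ℝ)), smul_eq_mul,
    integral_indicator (hBBm p hp n s), integral_indicator (hBBm p hp n 1)] at key
  have hcn : (c:ℝ) ^ n ≠ 0 := by positivity
  have hpow : c ^ (n + 2*S.card) = s ^ (((n:ℝ) + 2*S.card)/p) := by
    rw [hc, ← rpow_natCast (s ^ (1/p)) (n + 2*S.card), ← rpow_mul hs.le]
    congr 1
    push_cast
    ring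
  rw [← hpow, pow_add]
  field_simp at key
  linarith [key]

lemma masterIdent (p : ℝ) (hp : 1 ≤ p) (n : ℕ) (hn : 0 < n) (S : Finset (Fin n)) :
    Real.Gamma (((n:ℝ) + 2*S.card)/p + 1) * ∫ x in BB p n 1, FF S x
    = (2/p * Real.Gamma (3/p)) ^ S.card * (2/p * Real.Gamma (1/p)) ^ (n - S.card) := by
  classical
  have hp0 : 0 < p := lt_of_lt_of_le one_pos hp
  set q : ℝ := ((n:ℝ) + 2*S.card)/p with hq
  have hq0 : (0:ℝ) ≤ q := div_nonneg (by positivity) hp0.le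
  set C : ℝ := ∫ x in BB p n 1, FF S x with hC
  -- coordinate functions
  set f : Fin n → ℝ → ℝ := fun i t => (if i ∈ S then t^2 else 1) * Real.exp (-|t| ^ p) with hf
  have hfint : ∀ i, Integrable (f i) := by
    intro i
    by_cases h : i ∈ S
    · have h2 := aux1D_int p hp 1
      simp only [hf, h, if_true]
      simpa using h2
    · have h2 := aux1D_int p hp 0
      simp only [hf, h, if_false]
      simpa using h2
  have hfeval : ∀ i, ∫ t : ℝ, f i t
      = if i ∈ S then 2/p * Real.Gamma (3/p) else 2/p * Real.Gamma (1/p) := by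
    intro i
    by_cases h : i ∈ S
    · have h2 := aux1D_eval p hp 1
      simp only [hf, h, if_true]
      norm_num at h2 ⊢
      convert h2 using 3
    · have h2 := aux1D_eval p hp 0
      simp only [hf, h, if_false]
      norm_num at h2 ⊢
      convert h2 using 3
  have hprodeq : ∀ x : Fin n → ℝ, (∏ i, f i (x i)) = FF S x * Real.exp (-∑ i, |x i| ^ p) := by
    intro x
    simp only [hf]
    rw [Finset.prod_mul_distrib, ← Real.exp_sum, ← Finset.sum_neg_distrib]
    congr 1
    rw [Finset.prod_ite_mem, Finset.univ_inter]
    rfl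
  have hL1 : ∫ x : Fin n → ℝ, FF S x * Real.exp (-∑ i, |x i| ^ p)
      = (2/p * Real.Gamma (3/p)) ^ S.card * (2/p * Real.Gamma (1/p)) ^ (n - S.card) := by
    rw [show (fun x : Fin n → ℝ => FF S x * Real.exp (-∑ i, |x i| ^ p))
        = fun x => ∏ i, f i (x i) from funext fun x => (hprodeq x).symm]
    rw [MeasureTheory.integral_fintype_prod_volume_eq_prod f]
    rw [Finset.prod_congr rfl (fun i _ => hfeval i), Finset.prod_ite, Finset.prod_const,
      Finset.prod_const]
    congr 2
    · rw [Finset.filter_mem_eq_inter, Finset.univ_inter]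
    · have h1 : Finset.univ.filter (fun i => ¬ i ∈ S) = Sᶜ := by
        ext i; simp
      rw [h1, Finset.card_compl, Fintype.card_fin]
  have hIprod : Integrable (fun x : Fin n → ℝ => FF S x * Real.exp (-∑ i, |x i| ^ p)) := by
    have h2 := MeasureTheory.Integrable.fintype_prod (𝕜 := ℝ) (f := f) hfint
    exact h2.congr (Filter.Eventually.of_forall hprodeq)
  -- Fubini
  set T : Set ((Fin n → ℝ) × ℝ) := {z | ∑ i, |z.1 i| ^ p ≤ z.2} with hT
  have hTm : MeasurableSet T := measurableSet_le ((hNm p hp n).comp measurable_fst) measurable_snd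
  set H : ((Fin n → ℝ) × ℝ) → ℝ := T.indicator (fun z => FF S z.1 * Real.exp (-z.2)) with hH
  have hHnn : ∀ z, 0 ≤ H z :=
    fun z => Set.indicator_nonneg (fun w _ => mul_nonneg (hFFnn S _) (Real.exp_pos _).le) _
  have hHm : Measurable H :=
    (((hFFm S).comp measurable_fst).mul (measurable_snd.neg.exp)).indicator hTm
  have hsec : ∀ x : Fin n → ℝ, (fun s => H (x, s))
      = (Ici (∑ i, |x i| ^ p)).indicator (fun s => FF S x * Real.exp (-s)) := by
    intro x; funext s
    rw [hH]
    by_cases h : (∑ i, |x i| ^ p) ≤ s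
    · rw [Set.indicator_of_mem (show (x,s) ∈ T from h), Set.indicator_of_mem (Set.mem_Ici.2 h)]
    · rw [Set.indicator_of_notMem (show (x,s) ∉ T from h),
        Set.indicator_of_notMem (fun hh => h (Set.mem_Ici.1 hh))]
  have hIci : ∀ r : ℝ, IntegrableOn (fun s : ℝ => Real.exp (-s)) (Ici r) := by
    intro r
    rw [integrableOn_Ici_iff_integrableOn_Ioi]
    simpa using exp_neg_integrableOn_Ioi r one_pos
  have hsecint : ∀ x : Fin n → ℝ, Integrable (fun s => H (x, s)) := by
    intro x
    rw [hsec x, integrable_indicator_iff measurableSet_Ici]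
    exact (hIci _).const_mul _
  have hsint : ∀ x : Fin n → ℝ, ∫ s, H (x, s) = FF S x * Real.exp (-(∑ i, |x i| ^ p)) := by
    intro x
    rw [hsec x, integral_indicator measurableSet_Ici, integral_const_mul,
      integral_Ici_eq_integral_Ioi, integral_exp_neg_Ioi]
  have hHint : Integrable H (volume.prod volume) := by
    refine (integrable_prod_iff hHm.aestronglyMeasurable).2 ⟨ae_of_all _ hsecint, ?_⟩
    have h2 : (fun x : Fin n → ℝ => ∫ s, ‖H (x, s)‖)
        = fun x => FF S x * Real.exp (-(∑ i, |x i| ^ p)) := by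
      funext x
      rw [← hsint x]
      congr 1; funext s
      exact Real.norm_of_nonneg (hHnn _)
    rw [h2]; exact hIprod
  have hHint' : Integrable (Function.uncurry fun x s => H (x, s)) (volume.prod volume) := by
    have h2 : (Function.uncurry fun x s => H (x, s)) = H := by
      funext z; cases z; rfl
    rw [h2]; exact hHint
  have hswap : ∫ x : Fin n → ℝ, FF S x * Real.exp (-(∑ i, |x i| ^ p))
      = ∫ s : ℝ, ∫ x : Fin n → ℝ, H (x, s) := by
    rw [show (fun x : Fin n → ℝ => FF S x * Real.exp (-(∑ i, |x i| ^ p)))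
        = fun x => ∫ s, H (x, s) from funext fun x => (hsint x).symm]
    exact integral_integral_swap hHint'
  have hxsec : ∀ s : ℝ, (fun x => H (x, s))
      = (BB p n s).indicator (fun x => FF S x * Real.exp (-s)) := by
    intro s; funext x
    rw [hH]
    by_cases h : (∑ i, |x i| ^ p) ≤ s
    · rw [Set.indicator_of_mem (show (x,s) ∈ T from h),
        Set.indicator_of_mem (show x ∈ BB p n s from h)]
    · rw [Set.indicator_of_notMem (show (x,s) ∉ T from h),
        Set.indicator_of_notMem (show x ∉ BB p n s from h)]
  have hxint : ∀ s : ℝ, ∫ x : Fin n → ℝ, H (x, s)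
      = Real.exp (-s) * ∫ x in BB p n s, FF S x := by
    intro s
    rw [hxsec s, integral_indicator (hBBm p hp n s)]
    rw [show (fun x : Fin n → ℝ => FF S x * Real.exp (-s))
        = fun x => Real.exp (-s) * FF S x from funext fun x => mul_comm _ _]
    exact integral_const_mul _ _
  have houter : (fun s : ℝ => ∫ x : Fin n → ℝ, H (x, s))
      = (Ioi (0:ℝ)).indicator (fun s => C * (s ^ q * Real.exp (-s))) := by
    funext s
    rcases lt_trichotomy s 0 with hs | hs | hs
    · rw [hxint s]
      have hempty : BB p n s = ∅ := by
        ext y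
        simp only [BB, Set.mem_setOf_eq, Set.mem_empty_iff_false, iff_false, not_le]
        have h0 : (0:ℝ) ≤ ∑ i, |y i| ^ p :=
          Finset.sum_nonneg fun i _ => Real.rpow_nonneg (abs_nonneg _) _
        linarith
      rw [hempty, Measure.restrict_empty, integral_zero_measure, mul_zero,
        Set.indicator_of_notMem (by simpa using hs.not_gt)]
    · subst hs
      rw [hxint 0]
      have hsingle : BB p n 0 = {0} := by
        ext y
        simp only [BB, Set.mem_setOf_eq, Set.mem_singleton_iff]
        constructor
        · intro h
          have hnn : ∀ i ∈ Finset.univ, (0:ℝ) ≤ |y i| ^ p :=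
            fun i _ => Real.rpow_nonneg (abs_nonneg _) _
          have hz : ∀ i ∈ Finset.univ, |y i| ^ p = 0 :=
            (Finset.sum_eq_zero_iff_of_nonneg hnn).1
              (le_antisymm h (Finset.sum_nonneg hnn))
          funext i
          have := hz i (Finset.mem_univ i)
          have habs : |y i| = 0 := by
            by_contra hne
            exact hne (by
              have := Real.rpow_eq_zero (abs_nonneg _) hp0.ne' |>.1 this
              exact this)
          simpa using habs
        · rintro rfl
          simp [Real.zero_rpow hp0.ne']
      haveI : Nonempty (Fin n) := ⟨⟨0, hn⟩⟩
      rw [hsingle]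
      have hz : (volume : Measure (Fin n → ℝ)) {(0 : Fin n → ℝ)} = 0 := measure_singleton _
      rw [Measure.restrict_eq_zero.2 hz, integral_zero_measure, mul_zero,
        Set.indicator_of_notMem (by simp)]
    · rw [hxint s, ballScaling p hp n S hs, Set.indicator_of_mem (Set.mem_Ioi.2 hs), ← hq, ← hC]
      ring
  have final : ∫ x : Fin n → ℝ, FF S x * Real.exp (-(∑ i, |x i| ^ p))
      = C * Real.Gamma (q + 1) := by
    rw [hswap, houter, integral_indicator measurableSet_Ioi, integral_const_mul]
    congr 1
    have hcong : ∀ s ∈ Ioi (0:ℝ), s ^ q * Real.exp (-s) = s ^ q * Real.exp (-s ^ (1:ℝ)) :=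
      fun s _ => by rw [rpow_one]
    rw [setIntegral_congr_fun measurableSet_Ioi hcong,
      integral_rpow_mul_exp_neg_rpow one_pos (by linarith : (-1:ℝ) < q)]
    norm_num
  rw [mul_comm, ← final, hL1]

lemma unif_transfer (p : ℝ) (hp : 1 ≤ p) (n : ℕ)
    (f : (Fin n → ℝ) → ℝ) (g : E n → ℝ) (hfg : ∀ x : E n, g x = f (fun i => x i)) :
    ∫ x, g x ∂(unif (lpBall n p))
      = ((volume (BB p n 1)).toReal)⁻¹ * ∫ y in BB p n 1, f y := by
  have mp := EuclideanSpace.volume_preserving_symm_measurableEquiv_toLp (Fin n)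
  have hpre : (MeasurableEquiv.toLp 2 (Fin n → ℝ)).symm ⁻¹' (BB p n 1) = lpBall n p := rfl
  have hvol : volume (lpBall n p) = volume (BB p n 1) := by
    rw [← hpre]
    exact mp.measure_preimage (hBBm p hp n 1).nullMeasurableSet
  have mpr := mp.restrict_preimage (hBBm p hp n 1)
  rw [hpre] at mpr
  have hint : ∫ y in BB p n 1, f y = ∫ x, g x ∂(volume.restrict (lpBall n p)) := by
    rw [← mpr.integral_comp (MeasurableEquiv.measurableEmbedding _) f]
    refine integral_congr_ae (Filter.Eventually.of_forall fun x => ?_)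
    rw [hfg x]
    rfl
  rw [unif, integral_smul_measure, hvol, ENNReal.toReal_inv, hint, smul_eq_mul]

/-- For every `p ≥ 1` and `n ≥ 2`, a random vector uniformly distributed on
`B_p^n` satisfies `E[X₁²X₂²] - E[X₁²]E[X₂²] < 0`, i.e. `f(e₁,e₂) < 0`. -/
theorem sncp_Bpn_canonical_strict
    (p : ℝ) (hp : 1 ≤ p) (n : ℕ) (hn : 2 ≤ n) :
    ((∫ x, (x (⟨0, by omega⟩ : Fin n)) ^ 2 * (x (⟨1, by omega⟩ : Fin n)) ^ 2
        ∂(unif (lpBall n p))) -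
      (∫ x, (x (⟨0, by omega⟩ : Fin n)) ^ 2 ∂(unif (lpBall n p))) *
        (∫ x, (x (⟨1, by omega⟩ : Fin n)) ^ 2 ∂(unif (lpBall n p))) < 0) ∧
    covf (unif (lpBall n p)) (stdb (⟨0, by omega⟩ : Fin n)) (stdb ⟨1, by omega⟩) < 0 := by
  classical
  have hp0 : 0 < p := lt_of_lt_of_le one_pos hp
  set i0 : Fin n := ⟨0, by omega⟩ with hi0
  set i1 : Fin n := ⟨1, by omega⟩ with hi1
  have hne : i0 ≠ i1 := by
    simp [hi0, hi1, Fin.ext_iff]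
  -- abbreviations
  set vK : ℝ := (volume (BB p n 1)).toReal with hvK
  set c1 : ℝ := 2/p * Real.Gamma (1/p) with hc1def
  set c3 : ℝ := 2/p * Real.Gamma (3/p) with hc3def
  set g0 : ℝ := Real.Gamma ((n:ℝ)/p + 1) with hg0def
  set g2 : ℝ := Real.Gamma (((n:ℝ)+2)/p + 1) with hg2def
  set g4 : ℝ := Real.Gamma (((n:ℝ)+4)/p + 1) with hg4def
  have hc1 : 0 < c1 := mul_pos (by positivity) (Real.Gamma_pos_of_pos (by positivity))
  have hc3 : 0 < c3 := mul_pos (by positivity) (Real.Gamma_pos_of_pos (by positivity))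
  have hg0 : 0 < g0 := Real.Gamma_pos_of_pos (by positivity)
  have hg2 : 0 < g2 := Real.Gamma_pos_of_pos (by positivity)
  have hg4 : 0 < g4 := Real.Gamma_pos_of_pos (by positivity)
  -- instances of the master identity
  have E0 : g0 * vK = c1 ^ n := by
    have h := masterIdent p hp n (by omega) (∅ : Finset (Fin n))
    simp only [Finset.card_empty, Nat.cast_zero, mul_zero, add_zero, pow_zero, one_mul,
      Nat.sub_zero] at h
    have hFFone : ∫ x in BB p n 1, FF (∅ : Finset (Fin n)) x = vK := by
      simp [FF, hvK, Measure.real]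
    rw [hFFone] at h
    exact h
  have E1 : g2 * (∫ x in BB p n 1, (x i0)^2) = c3 * c1 ^ (n-1) := by
    have h := masterIdent p hp n (by omega) ({i0} : Finset (Fin n))
    simp only [Finset.card_singleton, Nat.cast_one, pow_one] at h
    have h2 : ∫ x in BB p n 1, FF ({i0} : Finset (Fin n)) x = ∫ x in BB p n 1, (x i0)^2 := by
      simp [FF]
    rw [h2] at h
    rw [show ((n:ℝ) + 2*1)/p + 1 = ((n:ℝ)+2)/p + 1 by ring] at h
    exact h
  have E2 : g2 * (∫ x in BB p n 1, (x i1)^2) = c3 * c1 ^ (n-1) := by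
    have h := masterIdent p hp n (by omega) ({i1} : Finset (Fin n))
    simp only [Finset.card_singleton, Nat.cast_one, pow_one] at h
    have h2 : ∫ x in BB p n 1, FF ({i1} : Finset (Fin n)) x = ∫ x in BB p n 1, (x i1)^2 := by
      simp [FF]
    rw [h2] at h
    rw [show ((n:ℝ) + 2*1)/p + 1 = ((n:ℝ)+2)/p + 1 by ring] at h
    exact h
  have E3 : g4 * (∫ x in BB p n 1, (x i0)^2 * (x i1)^2) = c3^2 * c1 ^ (n-2) := by
    have h := masterIdent p hp n (by omega) ({i0, i1} : Finset (Fin n))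
    have hcard : ({i0, i1} : Finset (Fin n)).card = 2 := by
      rw [Finset.card_insert_of_notMem (by simp [hne]), Finset.card_singleton]
    rw [hcard] at h
    have h2 : ∫ x in BB p n 1, FF ({i0, i1} : Finset (Fin n)) x
        = ∫ x in BB p n 1, (x i0)^2 * (x i1)^2 := by
      have : ∀ x : Fin n → ℝ, FF ({i0, i1} : Finset (Fin n)) x = (x i0)^2 * (x i1)^2 := by
        intro x
        rw [FF, Finset.prod_insert (by simp [hne]), Finset.prod_singleton]
      simp only [this]
    rw [h2] at h
    push_cast at h
    rw [show ((n:ℝ) + 2*2)/p + 1 = ((n:ℝ)+4)/p + 1 by ring] at h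
    exact h
  -- positivity of quantities
  set I1 : ℝ := ∫ x in BB p n 1, (x i0)^2 with hI1def
  set I2 : ℝ := ∫ x in BB p n 1, (x i1)^2 with hI2def
  set I12 : ℝ := ∫ x in BB p n 1, (x i0)^2 * (x i1)^2 with hI12def
  have hvKpos : 0 < vK := by
    have h := pow_pos hc1 n
    rw [← E0] at h
    exact pos_of_mul_pos_right h hg0.le
  have hI1pos : 0 < I1 := by
    have h := mul_pos hc3 (pow_pos hc1 (n-1))
    rw [← E1] at h
    exact pos_of_mul_pos_right h hg2.le
  have hI2pos : 0 < I2 := by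
    have h := mul_pos hc3 (pow_pos hc1 (n-1))
    rw [← E2] at h
    exact pos_of_mul_pos_right h hg2.le
  -- Gamma inequality
  have G : g2^2 < g0 * g4 := by
    have h := gamma_sq_lt (A := (n:ℝ)/p + 1) (t := 2/p) (by positivity) (by positivity)
    have e1 : (n:ℝ)/p + 1 + 2/p = ((n:ℝ)+2)/p + 1 := by ring
    have e2 : (n:ℝ)/p + 1 + 2*(2/p) = ((n:ℝ)+4)/p + 1 := by ring
    rw [e1, e2] at h
    rw [hg2def, hg0def, hg4def]
    exact h
  -- key product identity
  have hpowe : c1 ^ n * c1 ^ (n-2) = (c1 ^ (n-1))^2 := by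
    rw [← pow_add, ← pow_mul]
    congr 1
    omega
  have hEq : (g0 * g4) * (vK * I12) = g2^2 * (I1 * I2) := by
    have h1 : (g0 * vK) * (g4 * I12) = c1^n * (c3^2 * c1^(n-2)) := by rw [E0, E3]
    have h2 : (g2 * I1) * (g2 * I2) = (c3 * c1^(n-1)) * (c3 * c1^(n-1)) := by rw [E1, E2]
    have h3 : c1^n * (c3^2 * c1^(n-2)) = (c3 * c1^(n-1)) * (c3 * c1^(n-1)) := by
      rw [show (c3 * c1^(n-1)) * (c3 * c1^(n-1)) = c3^2 * (c1^(n-1))^2 by ring, ← hpowe]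
      ring
    calc (g0 * g4) * (vK * I12) = (g0 * vK) * (g4 * I12) := by ring
      _ = c1^n * (c3^2 * c1^(n-2)) := by rw [h1]
      _ = (c3 * c1^(n-1)) * (c3 * c1^(n-1)) := h3
      _ = (g2 * I1) * (g2 * I2) := by rw [h2]
      _ = g2^2 * (I1 * I2) := by ring
  have key : vK * I12 < I1 * I2 := by
    have h4 : (g0*g4) * (vK * I12) < (g0*g4) * (I1 * I2) := by
      rw [hEq]
      exact mul_lt_mul_of_pos_right G (mul_pos hI1pos hI2pos)
    exact lt_of_mul_lt_mul_left h4 (by positivity)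
  -- transfer the unif integrals
  have T12 : (∫ x, (x i0) ^ 2 * (x i1) ^ 2 ∂(unif (lpBall n p))) = vK⁻¹ * I12 :=
    unif_transfer p hp n (fun y => (y i0)^2 * (y i1)^2) (fun x => (x i0)^2 * (x i1)^2)
      (fun x => rfl)
  have T1 : (∫ x, (x i0) ^ 2 ∂(unif (lpBall n p))) = vK⁻¹ * I1 :=
    unif_transfer p hp n (fun y => (y i0)^2) (fun x => (x i0)^2) (fun x => rfl)
  have T2 : (∫ x, (x i1) ^ 2 ∂(unif (lpBall n p))) = vK⁻¹ * I2 :=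
    unif_transfer p hp n (fun y => (y i1)^2) (fun x => (x i1)^2) (fun x => rfl)
  have main : (∫ x, (x i0) ^ 2 * (x i1) ^ 2 ∂(unif (lpBall n p))) -
      (∫ x, (x i0) ^ 2 ∂(unif (lpBall n p))) * (∫ x, (x i1) ^ 2 ∂(unif (lpBall n p))) < 0 := by
    rw [T12, T1, T2]
    have heq2 : vK⁻¹ * I12 - (vK⁻¹ * I1) * (vK⁻¹ * I2) = (vK * I12 - I1 * I2) / vK^2 := by
      field_simp
    rw [heq2]
    apply div_neg_of_neg_of_pos (by linarith) (by positivity)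
  constructor
  · exact main
  · have hinner : ∀ (x : E n) (i : Fin n), (⟪x, stdb i⟫ : ℝ) = x i := by
      intro x i
      simp [stdb, EuclideanSpace.inner_single_right]
    rw [covf]
    simp_rw [hinner]
    exact main
end
end

section
/- The function F(x) = Γ(5x)·Γ(x)/Γ(3x)² is strictly increasing on the interval (0,1], and F(1/2) = 3. -/
open Real Filter Topology Finset

private lemma gur_term_pos {x : ℝ} (hx : 0 < x) (j : ℕ) :
    0 < (3*x+(j:ℝ))^2/((5*x+(j:ℝ))*(x+(j:ℝ))) := by
  have hj : (0:ℝ) ≤ j := Nat.cast_nonneg j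
  positivity

private lemma gur_term_le {x y : ℝ} (hx : 0 < x) (hxy : x ≤ y) (j : ℕ) :
    (3*x+(j:ℝ))^2/((5*x+(j:ℝ))*(x+(j:ℝ))) ≤ (3*y+(j:ℝ))^2/((5*y+(j:ℝ))*(y+(j:ℝ))) := by
  have hy : 0 < y := hx.trans_le hxy
  have hj : (0:ℝ) ≤ j := Nat.cast_nonneg j
  rw [div_le_div_iff₀ (by positivity) (by positivity)]
  nlinarith [mul_nonneg (mul_nonneg hj (sub_nonneg.2 hxy))
      (by positivity : (0:ℝ) ≤ (j:ℝ)*(x+y)+6*(x*y))]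

private lemma gur_term_lt {x y : ℝ} (hx : 0 < x) (hxy : x < y) :
    (3*x+(1:ℝ))^2/((5*x+(1:ℝ))*(x+(1:ℝ))) < (3*y+(1:ℝ))^2/((5*y+(1:ℝ))*(y+(1:ℝ))) := by
  have hy : 0 < y := hx.trans hxy
  rw [div_lt_div_iff₀ (by positivity) (by positivity)]
  nlinarith [mul_pos (sub_pos.2 hxy) (by positivity : (0:ℝ) < (x+y)+6*(x*y))]

private lemma gur_tendsto {x : ℝ} (hx : 0 < x) :
    Tendsto (fun n : ℕ => ∏ j ∈ Finset.range (n+1),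
        (3*x+(j:ℝ))^2/((5*x+(j:ℝ))*(x+(j:ℝ)))) atTop
      (𝓝 (Real.Gamma (5*x) * Real.Gamma x / Real.Gamma (3*x)^2)) := by
  have h3 : (0:ℝ) < Real.Gamma (3*x) := Real.Gamma_pos_of_pos (by linarith)
  have H := ((Real.GammaSeq_tendsto_Gamma (5*x)).mul (Real.GammaSeq_tendsto_Gamma x)).div
      ((Real.GammaSeq_tendsto_Gamma (3*x)).pow 2) (by positivity)
  refine H.congr' ?_
  filter_upwards [eventually_ge_atTop 1] with n hn
  have hN : (0:ℝ) < (n:ℝ) := by exact_mod_cast hn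
  have hA : 0 < ∏ j ∈ Finset.range (n+1), (5*x+(j:ℝ)) :=
    Finset.prod_pos fun j _ => by positivity
  have hB : 0 < ∏ j ∈ Finset.range (n+1), (x+(j:ℝ)) :=
    Finset.prod_pos fun j _ => by positivity
  have hC : 0 < ∏ j ∈ Finset.range (n+1), (3*x+(j:ℝ)) :=
    Finset.prod_pos fun j _ => by positivity
  have hR : ∏ j ∈ Finset.range (n+1), (3*x+(j:ℝ))^2/((5*x+(j:ℝ))*(x+(j:ℝ)))
      = (∏ j ∈ Finset.range (n+1), (3*x+(j:ℝ)))^2 /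
        ((∏ j ∈ Finset.range (n+1), (5*x+(j:ℝ))) * (∏ j ∈ Finset.range (n+1), (x+(j:ℝ)))) := by
    rw [Finset.prod_div_distrib, Finset.prod_mul_distrib, Finset.prod_pow]
  have key : (n:ℝ)^(5*x) * (n:ℝ)^x = ((n:ℝ)^(3*x))^2 := by
    rw [← Real.rpow_add hN, sq, ← Real.rpow_add hN]
    ring_nf
  have hfact : (0:ℝ) < (n.factorial : ℝ) := by positivity
  have h5x : (0:ℝ) < (n:ℝ)^(5*x) := Real.rpow_pos_of_pos hN _
  have h1x : (0:ℝ) < (n:ℝ)^x := Real.rpow_pos_of_pos hN _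
  have h3x : (0:ℝ) < (n:ℝ)^(3*x) := Real.rpow_pos_of_pos hN _
  simp only [Real.GammaSeq, Pi.div_apply]
  rw [hR]
  rw [div_mul_div_comm, div_pow, div_div_div_comm, mul_pow]
  rw [show (n:ℝ)^(5*x) * (n.factorial:ℝ) * ((n:ℝ)^x * (n.factorial:ℝ))
      = ((n:ℝ)^(3*x))^2 * ((n.factorial:ℝ))^2 by rw [← key]; ring]
  rw [mul_div_mul_left _ _ (by positivity)]
  rw [div_self (by positivity : ((n.factorial:ℝ))^2 ≠ 0), one_div_div]
  
private lemma gur_pos {x : ℝ} (hx : 0 < x) :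
    0 < Real.Gamma (5*x) * Real.Gamma x / Real.Gamma (3*x)^2 := by
  have h1 := Real.Gamma_pos_of_pos hx
  have h3 := Real.Gamma_pos_of_pos (show (0:ℝ) < 3*x by linarith)
  have h5 := Real.Gamma_pos_of_pos (show (0:ℝ) < 5*x by linarith)
  positivity

/-- Gurland's ratio `F(x) = Γ(5x)Γ(x)/Γ(3x)²` is strictly increasing on `(0,1]`
and `F(1/2) = 3`. -/
theorem gurland_ratio_strictMonoOn :
    StrictMonoOn (fun x : ℝ => Real.Gamma (5 * x) * Real.Gamma x / Real.Gamma (3 * x) ^ 2)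
      (Set.Ioc 0 1) ∧
    Real.Gamma (5 * (1 / 2 : ℝ)) * Real.Gamma (1 / 2 : ℝ) /
      Real.Gamma (3 * (1 / 2 : ℝ)) ^ 2 = 3 := by
  constructor
  · intro x hx y hy hxy
    simp only
    have hx0 : 0 < x := hx.1
    have hy0 : 0 < y := hx0.trans hxy
    set φ : ℝ → ℝ := fun t => (3*t+(1:ℝ))^2/((5*t+(1:ℝ))*(t+(1:ℝ))) with hφ
    have hφx : 0 < φ x := by have := gur_term_pos hx0 1; simpa using this
    have hφy : 0 < φ y := by have := gur_term_pos hy0 1; simpa using this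
    have hφlt : φ x < φ y := gur_term_lt hx0 hxy
    -- key: φ y * F x ≤ φ x * F y
    have hkey : φ y * (Real.Gamma (5*x) * Real.Gamma x / Real.Gamma (3*x)^2)
        ≤ φ x * (Real.Gamma (5*y) * Real.Gamma y / Real.Gamma (3*y)^2) := by
      refine le_of_tendsto_of_tendsto ((gur_tendsto hx0).const_mul (φ y))
        ((gur_tendsto hy0).const_mul (φ x)) ?_
      filter_upwards [eventually_ge_atTop 1] with n hn
      · have h1mem : (1:ℕ) ∈ Finset.range (n+1) := Finset.mem_range.2 (by omega)
        rw [← Finset.mul_prod_erase _ _ h1mem, ← Finset.mul_prod_erase _ _ h1mem]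
        have hprodle : ∏ j ∈ (Finset.range (n+1)).erase 1,
            (3*x+(j:ℝ))^2/((5*x+(j:ℝ))*(x+(j:ℝ)))
            ≤ ∏ j ∈ (Finset.range (n+1)).erase 1,
            (3*y+(j:ℝ))^2/((5*y+(j:ℝ))*(y+(j:ℝ))) :=
          Finset.prod_le_prod (fun j _ => (gur_term_pos hx0 j).le)
            (fun j _ => gur_term_le hx0 hxy.le j)
        have hprodpos : 0 < ∏ j ∈ (Finset.range (n+1)).erase 1,
            (3*x+(j:ℝ))^2/((5*x+(j:ℝ))*(x+(j:ℝ))) :=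
          Finset.prod_pos fun j _ => gur_term_pos hx0 j
        have e1 : (3*x+((1:ℕ):ℝ))^2/((5*x+((1:ℕ):ℝ))*(x+((1:ℕ):ℝ))) = φ x := by norm_num [hφ]
        have e2 : (3*y+((1:ℕ):ℝ))^2/((5*y+((1:ℕ):ℝ))*(y+((1:ℕ):ℝ))) = φ y := by norm_num [hφ]
        rw [e1, e2]
        calc φ y * (φ x * ∏ j ∈ (Finset.range (n+1)).erase 1,
              (3*x+(j:ℝ))^2/((5*x+(j:ℝ))*(x+(j:ℝ))))
            = (φ y * φ x) * ∏ j ∈ (Finset.range (n+1)).erase 1,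
              (3*x+(j:ℝ))^2/((5*x+(j:ℝ))*(x+(j:ℝ))) := by ring
          _ ≤ (φ y * φ x) * ∏ j ∈ (Finset.range (n+1)).erase 1,
              (3*y+(j:ℝ))^2/((5*y+(j:ℝ))*(y+(j:ℝ))) := by
              exact mul_le_mul_of_nonneg_left hprodle (by positivity)
          _ = φ x * (φ y * ∏ j ∈ (Finset.range (n+1)).erase 1,
              (3*y+(j:ℝ))^2/((5*y+(j:ℝ))*(y+(j:ℝ)))) := by ring
    have hFx := gur_pos hx0
    have hFy := gur_pos hy0
    have : φ x * (Real.Gamma (5*x) * Real.Gamma x / Real.Gamma (3*x)^2)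
        < φ x * (Real.Gamma (5*y) * Real.Gamma y / Real.Gamma (3*y)^2) := by
      calc φ x * (Real.Gamma (5*x) * Real.Gamma x / Real.Gamma (3*x)^2)
          < φ y * (Real.Gamma (5*x) * Real.Gamma x / Real.Gamma (3*x)^2) :=
            mul_lt_mul_of_pos_right hφlt hFx
        _ ≤ _ := hkey
    exact lt_of_mul_lt_mul_left this hφx.le
  · have h12 : Real.Gamma (1/2 : ℝ) = Real.sqrt π := Real.Gamma_one_half_eq
    have h32 : Real.Gamma (3/2 : ℝ) = (1/2) * Real.sqrt π := by
      have := Real.Gamma_add_one (s := (1/2:ℝ)) (by norm_num)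
      norm_num at this
      rw [show (3/2 : ℝ) = 1/2 + 1 by norm_num, Real.Gamma_add_one (by norm_num), h12]
    have h52 : Real.Gamma (5/2 : ℝ) = (3/4) * Real.sqrt π := by
      rw [show (5/2 : ℝ) = 3/2 + 1 by norm_num, Real.Gamma_add_one (by norm_num), h32]
      ring
    have hπ : Real.sqrt π * Real.sqrt π = π := Real.mul_self_sqrt pi_pos.le
    rw [show (5 * (1/2 : ℝ)) = 5/2 by norm_num, show (3 * (1/2 : ℝ)) = 3/2 by norm_num,
      h52, h32, h12]
    have hπ0 : (0:ℝ) < π := pi_pos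
    field_simp
    nlinarith [hπ, Real.sqrt_pos.2 hπ0]
end

section
/- Let n ≥ 2 and let η1, η2 ∈ S^{n−1} be orthonormal vectors in ℝ^n (|η1| = |η2| = 1 and ⟨η1,η2⟩ = 0). Then 0 ≤ Σ_{i=1}^n η1(i)² η2(i)² ≤ 1/2. The lower bound is attained at any two distinct vectors of the canonical basis, and the upper bound is attained at the vectors ξ1 = (e_i+e_j)/√2 and ξ2 = (e_i−e_j)/√2 for any i ≠ j. -/
open scoped RealInnerProductSpace

noncomputable section

private lemma sum_sq_of_norm_one {n : ℕ} (η : E n) (h : ‖η‖ = 1) :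
    ∑ i, η i ^ 2 = 1 := by
  have := real_inner_self_eq_norm_sq η
  rw [h] at this
  simp only [PiLp.inner_apply, RCLike.inner_apply, conj_trivial, one_pow] at this
  simpa [sq] using this

private lemma key_ineq {n : ℕ} (a b : Fin n → ℝ) (ha : ∑ i, a i ^ 2 = 1)
    (hb : ∑ i, b i ^ 2 = 1) (hab : ∑ i, a i * b i = 0) :
    ∑ i, a i ^ 2 * b i ^ 2 ≤ 1 / 2 := by
  have key : ∑ i, (2 * (a i * b i)) ^ 2 ≤ ∑ i, ∑ j, (a i * b j + a j * b i) ^ 2 := by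
    apply Finset.sum_le_sum
    intro i _
    have h1 : (2 * (a i * b i)) ^ 2 = (a i * b i + a i * b i) ^ 2 := by ring
    rw [h1]
    exact Finset.single_le_sum (f := fun j => (a i * b j + a j * b i) ^ 2)
      (fun j _ => sq_nonneg _) (Finset.mem_univ i)
  have hterm : ∀ i j : Fin n, (a i * b j + a j * b i) ^ 2
      = a i ^ 2 * b j ^ 2 + 2 * (a i * b i) * (a j * b j) + a j ^ 2 * b i ^ 2 := by
    intro i j; ring
  have expand : ∑ i, ∑ j, (a i * b j + a j * b i) ^ 2 = 2 := by
    simp_rw [hterm, Finset.sum_add_distrib, ← Finset.mul_sum, ← Finset.sum_mul, hb, ha, hab]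
    simp [hb]
    norm_num
  have key2 : ∑ i, (2 * (a i * b i)) ^ 2 = 4 * ∑ i, a i ^ 2 * b i ^ 2 := by
    rw [Finset.mul_sum]; apply Finset.sum_congr rfl; intro i _; ring
  rw [key2, expand] at key
  linarith

/-- if `η₁, η₂` are orthonormal then `0 ≤ ∑ η₁(i)²η₂(i)² ≤ 1/2`; the lower bound
is attained at any two distinct canonical basis vectors and the upper bound at
`ξ₁ = (eᵢ+eⱼ)/√2`, `ξ₂ = (eᵢ-eⱼ)/√2` for any `i ≠ j`. -/
theorem sum_sq_sq_bounds (n : ℕ) (hn : 2 ≤ n) :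
    (∀ η₁ η₂ : E n, ‖η₁‖ = 1 → ‖η₂‖ = 1 → ⟪η₁, η₂⟫ = 0 →
      0 ≤ ∑ i, η₁ i ^ 2 * η₂ i ^ 2 ∧ ∑ i, η₁ i ^ 2 * η₂ i ^ 2 ≤ 1 / 2) ∧
    (∀ i j : Fin n, i ≠ j → ∑ k, (stdb i) k ^ 2 * (stdb j) k ^ 2 = 0) ∧
    (∀ i j : Fin n, i ≠ j →
      ∑ k, ((Real.sqrt 2)⁻¹ • (stdb i + stdb j)) k ^ 2 *
        ((Real.sqrt 2)⁻¹ • (stdb i - stdb j)) k ^ 2 = 1 / 2) := by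
  refine ⟨?_, ?_, ?_⟩
  · intro η₁ η₂ h1 h2 h12
    have ha := sum_sq_of_norm_one η₁ h1
    have hb := sum_sq_of_norm_one η₂ h2
    have hab : ∑ i, η₁ i * η₂ i = 0 := by
      simpa [PiLp.inner_apply, RCLike.inner_apply, mul_comm] using h12
    exact ⟨Finset.sum_nonneg fun i _ => mul_nonneg (sq_nonneg _) (sq_nonneg _),
      key_ineq η₁ η₂ ha hb hab⟩
  · intro i j hij
    apply Finset.sum_eq_zero
    intro k _
    simp only [stdb, EuclideanSpace.single_apply]
    rcases eq_or_ne k i with rfl | h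
    · simp [hij]
    · simp [h]
  · intro i j hij
    have h2 : ((Real.sqrt 2)⁻¹ : ℝ) ^ 2 = 1 / 2 := by
      rw [inv_pow, Real.sq_sqrt (by norm_num : (0:ℝ) ≤ 2)]; norm_num
    rw [Fintype.sum_eq_add i j hij ?_]
    · simp [stdb, EuclideanSpace.single_apply, hij, hij.symm, smul_eq_mul, mul_pow, h2]
      ring
    · intro k ⟨hki, hkj⟩
      simp [stdb, EuclideanSpace.single_apply, hki, hkj]
end
end
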